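/- For all bi-labeled graphs 𝐅₁ = (F₁, a₁, b₁) ∈ M^{k,m} and 𝐅₂ = (F₂, a₂, b₂) ∈ M^{m,ℓ} and every graphon W, the graphon operator of the composition equals the composition of the graphon operators: T_{𝐅₁∘𝐅₂, W} = T_{𝐅₁,W} ∘ T_{𝐅₂,W} as operators L²(X^ℓ, μ^{⊗ℓ}) → L²(X^k, μ^{⊗k}). -/

import Mathlib

set_option linter.unusedSectionVars false
set_option linter.unusedVariables false


open MeasureTheory

noncomputable section

/-- A bi-labeled multigraph: vertex set `Fin n`, edge multiplicities on unordered pairs,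
`k` input labels and `l` output labels. -/
structure BLGraph (k l : ℕ) where
  n : ℕ
  e : Sym2 (Fin n) → ℕ
  a : Fin k → Fin n
  b : Fin l → Fin n

/-- No loops (edges only between distinct vertices) and the label tuples have pairwise
distinct entries. -/
def BLGraph.Proper {k l : ℕ} (F : BLGraph k l) : Prop :=
  (∀ p : Sym2 (Fin F.n), p.IsDiag → F.e p = 0) ∧
    Function.Injective F.a ∧ Function.Injective F.b

/-- A graphon: symmetric measurable `W : X × X → [0,1]`. -/
structure IsGraphon {X : Type*} [MeasurableSpace X] (W : X → X → ℝ) : Prop where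
  measurable : Measurable (Function.uncurry W)
  symm : ∀ x y, W x y = W y x
  nonneg : ∀ x y, 0 ≤ W x y
  le_one : ∀ x y, W x y ≤ 1

/-- Symmetrized evaluation of `W` on an unordered pair; agrees with `W` when `W` is
symmetric. -/
def symApp {X : Type*} (W : X → X → ℝ) : Sym2 X → ℝ :=
  Sym2.lift ⟨fun x y => (W x y + W y x) / 2, fun x y => by ring⟩

/-- The product over all edges (with multiplicity) of the `W`-weights. -/
def edgeProd {X : Type*} (W : X → X → ℝ) {n : ℕ} (e : Sym2 (Fin n) → ℕ)
    (z : Fin n → X) : ℝ :=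
  ∏ p : Sym2 (Fin n), symApp W (p.map z) ^ e p

open Classical in
/-- Combine the fixed values `x` on the input-labeled vertices with `y` elsewhere. -/
def extend {X : Type*} {k n : ℕ} (a : Fin k → Fin n) (x : Fin k → X) (y : Fin n → X) :
    Fin n → X :=
  fun v => if h : ∃ i, a i = v then x h.choose else y v

/-- The graphon operator `T_{𝐅,W}` of a bi-labeled graph, as a map on plain functions:
`(T_{𝐅,W} f)(x_{a_1},…,x_{a_k}) = ∫ (∏_{ij ∈ E} W(x_i,x_j)) f(x_{b_1},…,x_{b_l})`,
the integral being over the non-input coordinates (extra coordinates integrate to `1`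
since `μ` is a probability measure). -/
def rawOp {X : Type*} [MeasurableSpace X] (μ : Measure X) (W : X → X → ℝ)
    {k l : ℕ} (F : BLGraph k l) (f : (Fin l → X) → ℝ) (x : Fin k → X) : ℝ :=
  ∫ y : Fin F.n → X,
    edgeProd W F.e (extend F.a x y) * f (fun i => extend F.a x y (F.b i))
    ∂(Measure.pi fun _ => μ)

/-- Push forward edge multiplicities along a map of vertex sets. -/
def pushEdges {n m : ℕ} (φ : Fin n → Fin m) (e : Sym2 (Fin n) → ℕ) : Sym2 (Fin m) → ℕ :=
  fun q => ∑ p : Sym2 (Fin n), if p.map φ = q then e p else 0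

open Classical in
/-- The gluing map used for composition: a vertex of the second graph lying in the range of
its input labels `a₂` is identified with the corresponding output-labeled vertex of the first
graph, all other vertices are kept (as the second summand of `Fin (n₁ + n₂)`). -/
def glueMap {m n₁ n₂ : ℕ} (b₁ : Fin m → Fin n₁) (a₂ : Fin m → Fin n₂) (v : Fin n₂) :
    Fin (n₁ + n₂) :=
  if h : ∃ i, a₂ i = v then Fin.castAdd n₂ (b₁ h.choose) else Fin.natAdd n₁ v

/-- Composition of bi-labeled graphs: glue the output vertices of `F₁` to the input vertices
of `F₂` (edge multiplicities adding up); the inputs of the composition are those of `F₁` and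
the outputs those of `F₂`. -/
def BLGraph.comp {k m l : ℕ} (F₁ : BLGraph k m) (F₂ : BLGraph m l) : BLGraph k l where
  n := F₁.n + F₂.n
  e := fun q =>
    pushEdges (Fin.castAdd F₂.n) F₁.e q + pushEdges (glueMap F₁.b F₂.a) F₂.e q
  a := fun i => Fin.castAdd F₂.n (F₁.a i)
  b := fun i => glueMap F₁.b F₂.a (F₂.b i)

/-! ### Auxiliary lemmas -/

section Aux

variable {X : Type*} [MeasurableSpace X]

lemma symApp_mk (W : X → X → ℝ) (x y : X) : symApp W s(x, y) = (W x y + W y x) / 2 := rfl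

lemma symApp_nonneg {W : X → X → ℝ} (hW : IsGraphon W) (p : Sym2 X) : 0 ≤ symApp W p := by
  induction p using Sym2.ind with
  | _ x y =>
    rw [symApp_mk]
    have := hW.nonneg x y
    have := hW.nonneg y x
    linarith

lemma symApp_le_one {W : X → X → ℝ} (hW : IsGraphon W) (p : Sym2 X) : symApp W p ≤ 1 := by
  induction p using Sym2.ind with
  | _ x y =>
    rw [symApp_mk]
    have := hW.le_one x y
    have := hW.le_one y x
    linarith

lemma edgeProd_nonneg {W : X → X → ℝ} (hW : IsGraphon W) {n : ℕ} (e : Sym2 (Fin n) → ℕ)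
    (z : Fin n → X) : 0 ≤ edgeProd W e z :=
  Finset.prod_nonneg fun p _ => pow_nonneg (symApp_nonneg hW _) _

lemma edgeProd_le_one {W : X → X → ℝ} (hW : IsGraphon W) {n : ℕ} (e : Sym2 (Fin n) → ℕ)
    (z : Fin n → X) : edgeProd W e z ≤ 1 :=
  Finset.prod_le_one (fun p _ => pow_nonneg (symApp_nonneg hW _) _)
    (fun p _ => pow_le_one₀ (symApp_nonneg hW _) (symApp_le_one hW _))

lemma measurable_edgeProd {W : X → X → ℝ} (hW : IsGraphon W) {n : ℕ}
    (e : Sym2 (Fin n) → ℕ) : Measurable fun z : Fin n → X => edgeProd W e z := by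
  unfold edgeProd
  refine Finset.measurable_prod _ fun p _ => ?_
  refine Measurable.pow_const ?_ _
  induction p using Sym2.ind with
  | _ i j =>
    have hp1 : Measurable fun z : Fin n → X => ((z i, z j) : X × X) :=
      (measurable_pi_apply i).prodMk (measurable_pi_apply j)
    have hp2 : Measurable fun z : Fin n → X => ((z j, z i) : X × X) :=
      (measurable_pi_apply j).prodMk (measurable_pi_apply i)
    have h1 : Measurable fun z : Fin n → X => W (z i) (z j) := hW.measurable.comp hp1
    have h2 : Measurable fun z : Fin n → X => W (z j) (z i) := hW.measurable.comp hp2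
    simpa [Sym2.map_pair_eq, symApp_mk] using (h1.add h2).div_const 2

lemma edgeProd_add {W : X → X → ℝ} {n : ℕ} (e₁ e₂ : Sym2 (Fin n) → ℕ) (z : Fin n → X) :
    edgeProd W (fun p => e₁ p + e₂ p) z = edgeProd W e₁ z * edgeProd W e₂ z := by
  simp [edgeProd, pow_add, Finset.prod_mul_distrib]

lemma edgeProd_push {W : X → X → ℝ} {n n' : ℕ} (φ : Fin n → Fin n') (e : Sym2 (Fin n) → ℕ)
    (z : Fin n' → X) : edgeProd W (pushEdges φ e) z = edgeProd W e (z ∘ φ) := by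
  unfold edgeProd pushEdges
  simp only [← Finset.prod_pow_eq_pow_sum]
  rw [Finset.prod_comm]
  refine Finset.prod_congr rfl fun p _ => ?_
  rw [Finset.prod_eq_single (Sym2.map φ p)]
  · rw [if_pos rfl, ← Sym2.map_map]
  · intro q _ hq
    rw [if_neg (Ne.symm hq), pow_zero]
  · intro h
    exact absurd (Finset.mem_univ _) h

lemma extend_apply_neg {k n : ℕ} (a : Fin k → Fin n) (x : Fin k → X) (y : Fin n → X)
    (v : Fin n) (hv : ¬∃ i, a i = v) : _root_.extend a x y v = y v := by
  unfold _root_.extend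
  rw [dif_neg hv]

lemma castAdd_inj {n₁ n₂ : ℕ} : Function.Injective (Fin.castAdd n₂ : Fin n₁ → Fin (n₁ + n₂)) :=
  fun u v h => Fin.ext (by simpa using congrArg Fin.val h)

lemma extend_castAdd {k n₁ n₂ : ℕ} {a₁ : Fin k → Fin n₁} (ha : Function.Injective a₁)
    (x : Fin k → X) (Y : Fin (n₁ + n₂) → X) (v : Fin n₁) :
    _root_.extend (fun i => Fin.castAdd n₂ (a₁ i)) x Y (Fin.castAdd n₂ v)
      = _root_.extend a₁ x (fun w => Y (Fin.castAdd n₂ w)) v := by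
  unfold _root_.extend
  by_cases h : ∃ i, a₁ i = v
  · have h' : ∃ i, Fin.castAdd n₂ (a₁ i) = Fin.castAdd n₂ v :=
      ⟨h.choose, by rw [h.choose_spec]⟩
    rw [dif_pos h', dif_pos h]
    congr 1
    exact ha ((castAdd_inj h'.choose_spec).trans h.choose_spec.symm)
  · rw [dif_neg, dif_neg h]
    rintro ⟨i, hi⟩
    exact h ⟨i, castAdd_inj hi⟩

lemma extend_natAdd {k n₁ n₂ : ℕ} (a₁ : Fin k → Fin n₁) (x : Fin k → X)
    (Y : Fin (n₁ + n₂) → X) (v : Fin n₂) :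
    _root_.extend (fun i => Fin.castAdd n₂ (a₁ i)) x Y (Fin.natAdd n₁ v) = Y (Fin.natAdd n₁ v) := by
  unfold _root_.extend
  rw [dif_neg]
  rintro ⟨i, hi⟩
  have h := congrArg Fin.val hi
  have := (a₁ i).isLt
  simp only [Fin.coe_castAdd, Fin.coe_natAdd] at h
  omega

lemma extend_glueMap {k m n₁ n₂ : ℕ} {a₁ : Fin k → Fin n₁} (ha : Function.Injective a₁)
    (b₁ : Fin m → Fin n₁) (a₂ : Fin m → Fin n₂)
    (x : Fin k → X) (Y : Fin (n₁ + n₂) → X) (v : Fin n₂) :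
    _root_.extend (fun i => Fin.castAdd n₂ (a₁ i)) x Y (glueMap b₁ a₂ v)
      = _root_.extend a₂ (fun j => _root_.extend a₁ x (fun w => Y (Fin.castAdd n₂ w)) (b₁ j))
          (fun w => Y (Fin.natAdd n₁ w)) v := by
  unfold glueMap
  by_cases h : ∃ i, a₂ i = v
  · rw [dif_pos h, extend_castAdd ha]
    conv_rhs => unfold _root_.extend
    rw [dif_pos h]
    rfl
  · rw [dif_neg h, extend_natAdd]
    conv_rhs => unfold _root_.extend
    rw [dif_neg h]

open Classical in
/-- The coordinate-selection map underlying the composed operator's inner argument. -/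
def sigmaMap {k m l n₁ n₂ : ℕ} (a₁ : Fin k → Fin n₁) (b₁ : Fin m → Fin n₁)
    (a₂ : Fin m → Fin n₂) (b₂ : Fin l → Fin n₂) (i : Fin l) : Fin k ⊕ (Fin n₁ ⊕ Fin n₂) :=
  if h : ∃ j, a₂ j = b₂ i then
    if h' : ∃ j', a₁ j' = b₁ h.choose then Sum.inl h'.choose
    else Sum.inr (Sum.inl (b₁ h.choose))
  else Sum.inr (Sum.inr (b₂ i))

lemma sigmaMap_spec {k m l n₁ n₂ : ℕ} (a₁ : Fin k → Fin n₁) (b₁ : Fin m → Fin n₁)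
    (a₂ : Fin m → Fin n₂) (b₂ : Fin l → Fin n₂)
    (x : Fin k → X) (y₁ : Fin n₁ → X) (y₂ : Fin n₂ → X) (i : Fin l) :
    Sum.elim x (Sum.elim y₁ y₂) (sigmaMap a₁ b₁ a₂ b₂ i)
      = _root_.extend a₂ (fun j => _root_.extend a₁ x y₁ (b₁ j)) y₂ (b₂ i) := by
  unfold sigmaMap _root_.extend
  by_cases h : ∃ j, a₂ j = b₂ i
  · simp only [dif_pos h]
    by_cases h' : ∃ j', a₁ j' = b₁ h.choose
    · simp only [dif_pos h']
      rfl
    · simp only [dif_neg h']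
      rfl
  · simp only [dif_neg h]
    rfl

lemma sigmaMap_injective {k m l n₁ n₂ : ℕ} {a₁ : Fin k → Fin n₁} {b₁ : Fin m → Fin n₁}
    {a₂ : Fin m → Fin n₂} {b₂ : Fin l → Fin n₂}
    (hb₁ : Function.Injective b₁) (hb₂ : Function.Injective b₂) :
    Function.Injective (sigmaMap a₁ b₁ a₂ b₂) := by
  intro i i' heq
  unfold sigmaMap at heq
  by_cases h : ∃ j, a₂ j = b₂ i <;> by_cases h' : ∃ j, a₂ j = b₂ i'
  · rw [dif_pos h, dif_pos h'] at heq
    have key : b₁ h.choose = b₁ h'.choose := by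
      by_cases g : ∃ j', a₁ j' = b₁ h.choose <;> by_cases g' : ∃ j', a₁ j' = b₁ h'.choose
      · rw [dif_pos g, dif_pos g'] at heq
        have : g.choose = g'.choose := Sum.inl_injective heq
        rw [← g.choose_spec, ← g'.choose_spec, this]
      · rw [dif_pos g, dif_neg g'] at heq
        exact absurd heq (by simp)
      · rw [dif_neg g, dif_pos g'] at heq
        exact absurd heq (by simp)
      · rw [dif_neg g, dif_neg g'] at heq
        simpa using heq
    have : h.choose = h'.choose := hb₁ key
    apply hb₂
    rw [← h.choose_spec, ← h'.choose_spec, this]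
  · rw [dif_pos h, dif_neg h'] at heq
    by_cases g : ∃ j', a₁ j' = b₁ h.choose
    · rw [dif_pos g] at heq
      exact absurd heq (by simp)
    · rw [dif_neg g] at heq
      exact absurd heq (by simp)
  · rw [dif_neg h, dif_pos h'] at heq
    by_cases g : ∃ j', a₁ j' = b₁ h'.choose
    · rw [dif_pos g] at heq
      exact absurd heq (by simp)
    · rw [dif_neg g] at heq
      exact absurd heq (by simp)
  · rw [dif_neg h, dif_neg h'] at heq
    exact hb₂ (Sum.inr_injective (Sum.inr_injective heq))

open Classical in
lemma measurePreserving_comp_inj (μ : Measure X) [IsProbabilityMeasure μ]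
    {ι κ : Type*} [Fintype ι] [Fintype κ] {σ : ι → κ} (hσ : Function.Injective σ) :
    MeasurePreserving (fun z : κ → X => z ∘ σ)
      (Measure.pi fun _ : κ => μ) (Measure.pi fun _ : ι => μ) := by
  have hmeas : Measurable fun z : κ → X => z ∘ σ :=
    measurable_pi_lambda _ fun i => measurable_pi_apply _
  refine ⟨hmeas, ?_⟩
  refine (Measure.pi_eq fun s hs => ?_).symm
  rw [Measure.map_apply hmeas (MeasurableSet.univ_pi hs)]
  set t : κ → Set X := fun j => if h : ∃ i, σ i = j then s h.choose else Set.univ with ht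
  have key : ∀ i, t (σ i) = s i := by
    intro i
    have h : ∃ i', σ i' = σ i := ⟨i, rfl⟩
    rw [ht]
    dsimp only
    rw [dif_pos h]
    exact congrArg s (hσ h.choose_spec)
  have hpre : (fun z : κ → X => z ∘ σ) ⁻¹' Set.pi Set.univ s = Set.pi Set.univ t := by
    ext z
    simp only [Set.mem_preimage, Set.mem_pi, Set.mem_univ, true_implies, Function.comp_apply]
    constructor
    · intro hz j
      rw [ht]
      dsimp only
      split_ifs with h
      · have := hz h.choose
        rwa [h.choose_spec] at this
      · trivial
    · intro hz i
      have := hz (σ i)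
      rwa [key i] at this
  rw [hpre, Measure.pi_pi]
  calc (∏ j, μ (t j)) = ∏ j ∈ Finset.image σ Finset.univ, μ (t j) := by
        refine (Finset.prod_subset (Finset.subset_univ _) fun j _ hj => ?_).symm
        rw [ht]
        dsimp only
        rw [dif_neg, measure_univ]
        rintro ⟨i, rfl⟩
        exact hj (Finset.mem_image_of_mem _ (Finset.mem_univ i))
    _ = ∏ i, μ (t (σ i)) := Finset.prod_image fun i _ i' _ h => hσ h
    _ = ∏ i, μ (s i) := by simp only [key]

lemma measurePreserving_sumElim (μ : Measure X) [IsProbabilityMeasure μ]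
    (ι κ : Type*) [Fintype ι] [Fintype κ] [MeasurableSpace ι] [MeasurableSpace κ] :
    MeasurePreserving (fun p : (ι → X) × (κ → X) => Sum.elim p.1 p.2)
      ((Measure.pi fun _ : ι => μ).prod (Measure.pi fun _ : κ => μ))
      (Measure.pi fun _ : ι ⊕ κ => μ) := by
  have h := measurePreserving_sumPiEquivProdPi_symm (fun _ : ι ⊕ κ => μ)
  have hfun : ⇑(MeasurableEquiv.sumPiEquivProdPi (fun _ : ι ⊕ κ => X)).symm
      = fun p : (ι → X) × (κ → X) => Sum.elim p.1 p.2 := by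
    funext p x
    rcases x with i | j <;> rfl
  rwa [hfun] at h

/-- The measurable equivalence `(X^{n₁} × X^{n₂}) ≃ X^{n₁+n₂}`. -/
def combEquiv (X : Type*) [MeasurableSpace X] (n₁ n₂ : ℕ) :
    ((Fin n₁ → X) × (Fin n₂ → X)) ≃ᵐ (Fin (n₁ + n₂) → X) :=
  (MeasurableEquiv.sumPiEquivProdPi fun _ : Fin n₁ ⊕ Fin n₂ => X).symm.trans
    (MeasurableEquiv.piCongrLeft (fun _ => X) finSumFinEquiv)

lemma combEquiv_castAdd {n₁ n₂ : ℕ} (p : (Fin n₁ → X) × (Fin n₂ → X)) (v : Fin n₁) :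
    combEquiv X n₁ n₂ p (Fin.castAdd n₂ v) = p.1 v := by
  unfold combEquiv
  rw [MeasurableEquiv.trans_apply, ← finSumFinEquiv_apply_left,
    MeasurableEquiv.piCongrLeft_apply_apply]
  rfl

lemma combEquiv_natAdd {n₁ n₂ : ℕ} (p : (Fin n₁ → X) × (Fin n₂ → X)) (v : Fin n₂) :
    combEquiv X n₁ n₂ p (Fin.natAdd n₁ v) = p.2 v := by
  unfold combEquiv
  rw [MeasurableEquiv.trans_apply, ← finSumFinEquiv_apply_right,
    MeasurableEquiv.piCongrLeft_apply_apply]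
  rfl

lemma measurePreserving_combEquiv (μ : Measure X) [IsProbabilityMeasure μ] (n₁ n₂ : ℕ) :
    MeasurePreserving (combEquiv X n₁ n₂)
      ((Measure.pi fun _ : Fin n₁ => μ).prod (Measure.pi fun _ : Fin n₂ => μ))
      (Measure.pi fun _ : Fin (n₁ + n₂) => μ) :=
  (measurePreserving_piCongrLeft (fun _ : Fin (n₁ + n₂) => μ) finSumFinEquiv).comp
    (measurePreserving_sumPiEquivProdPi_symm (fun _ : Fin n₁ ⊕ Fin n₂ => μ))

lemma measurable_extend_comp {k n : ℕ} (a : Fin k → Fin n)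
    {β : Type*} [MeasurableSpace β] {g : β → Fin k → X} {h : β → Fin n → X}
    (hg : Measurable g) (hh : Measurable h) :
    Measurable fun p => _root_.extend a (g p) (h p) := by
  refine measurable_pi_lambda _ fun v => ?_
  unfold _root_.extend
  by_cases hv : ∃ i, a i = v
  · simp only [dif_pos hv]
    exact (measurable_pi_apply _).comp hg
  · simp only [dif_neg hv]
    exact (measurable_pi_apply _).comp hh

end Aux

/-- The graphon operator of a composition of bi-labeled graphs is the
composition of the graphon operators: `T_{𝐅₁∘𝐅₂,W} = T_{𝐅₁,W} ∘ T_{𝐅₂,W}` as operators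
`L²(X^l, μ^{⊗l}) → L²(X^k, μ^{⊗k})`. -/
theorem stmt2 {X : Type*} [MeasurableSpace X] (μ : Measure X) [IsProbabilityMeasure μ]
    (W : X → X → ℝ) (hW : IsGraphon W) {k m l : ℕ}
    (F₁ : BLGraph k m) (F₂ : BLGraph m l) (h₁ : F₁.Proper) (h₂ : F₂.Proper)
    (f : (Fin l → X) → ℝ) (hf : MemLp f 2 (Measure.pi fun _ : Fin l => μ)) :
    rawOp μ W (F₁.comp F₂) f =ᵐ[Measure.pi fun _ : Fin k => μ]
      rawOp μ W F₁ (rawOp μ W F₂ f) := by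
  classical
  obtain ⟨-, ha₁, hb₁⟩ := h₁
  obtain ⟨-, ha₂, hb₂⟩ := h₂
  -- the bounded measurable edge-weight factor
  set C : (Fin k → X) × ((Fin F₁.n → X) × (Fin F₂.n → X)) → ℝ :=
    fun p => edgeProd W F₁.e (_root_.extend F₁.a p.1 p.2.1) *
      edgeProd W F₂.e
        (_root_.extend F₂.a (fun j => _root_.extend F₁.a p.1 p.2.1 (F₁.b j)) p.2.2)
    with hCdef
  -- the coordinate selection map feeding `f`
  set Ψ : (Fin k → X) × ((Fin F₁.n → X) × (Fin F₂.n → X)) → (Fin l → X) :=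
    fun p i => _root_.extend F₂.a
      (fun j => _root_.extend F₁.a p.1 p.2.1 (F₁.b j)) p.2.2 (F₂.b i) with hΨdef
  -- Step 1: pointwise change of variables
  have step1 : ∀ x : Fin k → X, rawOp μ W (F₁.comp F₂) f x
      = ∫ q, C (x, q) * (f ∘ Ψ) (x, q)
          ∂((Measure.pi fun _ : Fin F₁.n => μ).prod (Measure.pi fun _ : Fin F₂.n => μ)) := by
    intro x
    have hstep : rawOp μ W (F₁.comp F₂) f x
        = ∫ Y : Fin (F₁.n + F₂.n) → X,
            edgeProd W (fun q => pushEdges (Fin.castAdd F₂.n) F₁.e q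
                + pushEdges (glueMap F₁.b F₂.a) F₂.e q)
              (_root_.extend (fun i => Fin.castAdd F₂.n (F₁.a i)) x Y) *
            f (fun i => _root_.extend (fun i => Fin.castAdd F₂.n (F₁.a i)) x Y
                (glueMap F₁.b F₂.a (F₂.b i)))
            ∂(Measure.pi fun _ => μ) := rfl
    rw [hstep,
      ← (measurePreserving_combEquiv μ F₁.n F₂.n).integral_comp
        (combEquiv X F₁.n F₂.n).measurableEmbedding]
    refine integral_congr_ae (Filter.Eventually.of_forall fun q => ?_)
    dsimp only
    set Y : Fin (F₁.n + F₂.n) → X := combEquiv X F₁.n F₂.n q with hYdef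
    have hYc : (fun w => Y (Fin.castAdd F₂.n w)) = q.1 :=
      funext fun w => combEquiv_castAdd q w
    have hYn : (fun w => Y (Fin.natAdd F₁.n w)) = q.2 :=
      funext fun w => combEquiv_natAdd q w
    have hZc : (fun v => _root_.extend (fun i => Fin.castAdd F₂.n (F₁.a i)) x Y
        (Fin.castAdd F₂.n v)) = _root_.extend F₁.a x q.1 := by
      funext v
      rw [extend_castAdd ha₁, hYc]
    have hZg : (fun v => _root_.extend (fun i => Fin.castAdd F₂.n (F₁.a i)) x Y
          (glueMap F₁.b F₂.a v))
        = _root_.extend F₂.a (fun j => _root_.extend F₁.a x q.1 (F₁.b j)) q.2 := by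
      funext v
      rw [extend_glueMap ha₁, hYc, hYn]
    have hbf : (fun i => _root_.extend (fun i => Fin.castAdd F₂.n (F₁.a i)) x Y
          (glueMap F₁.b F₂.a (F₂.b i)))
        = fun i => _root_.extend F₂.a (fun j => _root_.extend F₁.a x q.1 (F₁.b j)) q.2
            (F₂.b i) :=
      funext fun i => congrFun hZg (F₂.b i)
    rw [edgeProd_add, edgeProd_push, edgeProd_push, Function.comp_def, Function.comp_def,
      hZc, hZg, hbf]
    simp only [hCdef, hΨdef, Function.comp]
  -- Step 2: integrability on the full product
  have hpack : MeasurePreserving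
      (fun p : (Fin k → X) × ((Fin F₁.n → X) × (Fin F₂.n → X)) =>
        Sum.elim p.1 (Sum.elim p.2.1 p.2.2))
      ((Measure.pi fun _ : Fin k => μ).prod
        ((Measure.pi fun _ : Fin F₁.n => μ).prod (Measure.pi fun _ : Fin F₂.n => μ)))
      (Measure.pi fun _ : Fin k ⊕ (Fin F₁.n ⊕ Fin F₂.n) => μ) := by
    have h1 := (MeasurePreserving.id (Measure.pi fun _ : Fin k => μ)).prod
      (measurePreserving_sumElim μ (Fin F₁.n) (Fin F₂.n))
    have h2 := measurePreserving_sumElim μ (Fin k) (Fin F₁.n ⊕ Fin F₂.n)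
    exact h2.comp h1
  have hσinj : Function.Injective (sigmaMap F₁.a F₁.b F₂.a F₂.b) :=
    sigmaMap_injective hb₁ hb₂
  have hΨmp : MeasurePreserving Ψ
      ((Measure.pi fun _ : Fin k => μ).prod
        ((Measure.pi fun _ : Fin F₁.n => μ).prod (Measure.pi fun _ : Fin F₂.n => μ)))
      (Measure.pi fun _ : Fin l => μ) := by
    have hcomp := (measurePreserving_comp_inj μ hσinj).comp hpack
    have hfe : ((fun z : (Fin k ⊕ (Fin F₁.n ⊕ Fin F₂.n)) → X =>
          z ∘ sigmaMap F₁.a F₁.b F₂.a F₂.b) ∘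
        fun p : (Fin k → X) × ((Fin F₁.n → X) × (Fin F₂.n → X)) =>
          Sum.elim p.1 (Sum.elim p.2.1 p.2.2)) = Ψ := by
      funext p
      funext i
      exact sigmaMap_spec F₁.a F₁.b F₂.a F₂.b p.1 p.2.1 p.2.2 i
    rwa [hfe] at hcomp
  have hfint : Integrable f (Measure.pi fun _ : Fin l => μ) := hf.integrable one_le_two
  have hfΨ : Integrable (f ∘ Ψ)
      ((Measure.pi fun _ : Fin k => μ).prod
        ((Measure.pi fun _ : Fin F₁.n => μ).prod (Measure.pi fun _ : Fin F₂.n => μ))) :=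
    (hΨmp.integrable_comp hfint.aestronglyMeasurable).2 hfint
  have hCmeas : Measurable C := by
    have hext1 := measurable_extend_comp (X := X) F₁.a
      (g := fun p : (Fin k → X) × ((Fin F₁.n → X) × (Fin F₂.n → X)) => p.1)
      (h := fun p => p.2.1) measurable_fst (measurable_fst.comp measurable_snd)
    have hx' : Measurable fun p : (Fin k → X) × ((Fin F₁.n → X) × (Fin F₂.n → X)) =>
        (fun j => _root_.extend F₁.a p.1 p.2.1 (F₁.b j)) := by
      refine measurable_pi_lambda _ fun j => ?_
      exact (measurable_pi_apply (F₁.b j)).comp hext1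
    have hext2 := measurable_extend_comp (X := X) F₂.a
      (g := fun p : (Fin k → X) × ((Fin F₁.n → X) × (Fin F₂.n → X)) =>
        (fun j => _root_.extend F₁.a p.1 p.2.1 (F₁.b j)))
      (h := fun p => p.2.2) hx' (measurable_snd.comp measurable_snd)
    have hE1 := (measurable_edgeProd hW F₁.e).comp hext1
    have hE2 := (measurable_edgeProd hW F₂.e).comp hext2
    exact hE1.mul hE2
  have hCbdd : ∀ p, ‖C p‖ ≤ 1 := by
    intro p
    rw [hCdef, Real.norm_eq_abs,
      abs_of_nonneg (mul_nonneg (edgeProd_nonneg hW _ _) (edgeProd_nonneg hW _ _))]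
    exact mul_le_one₀ (edgeProd_le_one hW _ _) (edgeProd_nonneg hW _ _)
      (edgeProd_le_one hW _ _)
  have hGint : Integrable (fun p => C p * (f ∘ Ψ) p)
      ((Measure.pi fun _ : Fin k => μ).prod
        ((Measure.pi fun _ : Fin F₁.n => μ).prod (Measure.pi fun _ : Fin F₂.n => μ))) :=
    hfΨ.bdd_mul hCmeas.aestronglyMeasurable (Filter.Eventually.of_forall hCbdd)
  -- Step 3: Fubini, a.e. in `x`
  filter_upwards [hGint.prod_right_ae] with x hx
  rw [step1 x, MeasureTheory.integral_prod _ hx]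
  show _ = ∫ y₁ : Fin F₁.n → X,
      edgeProd W F₁.e (_root_.extend F₁.a x y₁) *
        rawOp μ W F₂ f (fun j => _root_.extend F₁.a x y₁ (F₁.b j))
      ∂(Measure.pi fun _ => μ)
  refine integral_congr_ae (Filter.Eventually.of_forall fun y₁ => ?_)
  dsimp only
  have hpt : ∀ y₂ : Fin F₂.n → X, C (x, (y₁, y₂)) * (f ∘ Ψ) (x, (y₁, y₂))
      = edgeProd W F₁.e (_root_.extend F₁.a x y₁) *
        (edgeProd W F₂.e
            (_root_.extend F₂.a (fun j => _root_.extend F₁.a x y₁ (F₁.b j)) y₂) *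
          f (fun i => _root_.extend F₂.a
            (fun j => _root_.extend F₁.a x y₁ (F₁.b j)) y₂ (F₂.b i))) := by
    intro y₂
    simp only [hCdef, hΨdef, Function.comp]
    ring
  rw [funext hpt, integral_const_mul]
  rfl
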